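/- Let L : ℝ^d → ℝ^n have convex, continuously differentiable components, and suppose Γ(p) = argmin_u ⟨p, L(u)⟩ is nonempty for every p ∈ Δ_n. Then the set Γ(Δ_n) = ∪_{p ∈ Δ_n} Γ(p) is closed in ℝ^d. -/

import Mathlib

/-- If L has convex differentiable components and Γ(p) is nonempty for every p ∈ Δ_n,
then the set of all surrogate minimizers Γ(Δ_n) is closed in ℝ^d. -/
theorem Gamma_image_closed (d n : ℕ)
    (L : EuclideanSpace ℝ (Fin d) → Fin n → ℝ)
    (hconv : ∀ y, ConvexOn ℝ Set.univ (fun u => L u y))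
    (hdiff : ∀ y, Differentiable ℝ (fun u => L u y))
    (hne : ∀ p ∈ stdSimplex ℝ (Fin n),
      {u : EuclideanSpace ℝ (Fin d) | ∀ v, ∑ y, p y * L u y ≤ ∑ y, p y * L v y}.Nonempty) :
    IsClosed {u : EuclideanSpace ℝ (Fin d) | ∃ p ∈ stdSimplex ℝ (Fin n),
      ∀ v, ∑ y, p y * L u y ≤ ∑ y, p y * L v y} := by
  rw [← isSeqClosed_iff_isClosed]
  intro u a hmem htend
  choose p hp hmin using hmem
  obtain ⟨q, hq, φ, hφ, hpq⟩ := (isCompact_stdSimplex ℝ (Fin n)).tendsto_subseq hp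
  refine ⟨q, hq, fun v => ?_⟩
  have hatend : Filter.Tendsto (fun k => u (φ k)) Filter.atTop (nhds a) :=
    htend.comp hφ.tendsto_atTop
  have hcoord : ∀ y, Filter.Tendsto (fun k => p (φ k) y) Filter.atTop (nhds (q y)) :=
    fun y => ((continuous_apply y).tendsto q).comp hpq
  have h1 : Filter.Tendsto (fun k => ∑ y, p (φ k) y * L (u (φ k)) y) Filter.atTop
      (nhds (∑ y, q y * L a y)) :=
    tendsto_finset_sum _ fun y _ =>
      (hcoord y).mul ((((hdiff y).continuous.tendsto a).comp hatend))
  have h2 : Filter.Tendsto (fun k => ∑ y, p (φ k) y * L v y) Filter.atTop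
      (nhds (∑ y, q y * L v y)) :=
    tendsto_finset_sum _ fun y _ => (hcoord y).mul tendsto_const_nhds
  exact le_of_tendsto_of_tendsto' h1 h2 fun k => hmin (φ k) v
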